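/- If a fuzzy cover q ∈ Δ_N is exact, then for every subset A ⊆ N the number of elements of A with strictly positive membership on A satisfies |{i ∈ A : q_i^A > 0}| ∈ {0, |A|}. Equivalently (contrapositive, which is what is proved): if there is a subset A with ∅ ⊂ {i ∈ A : q_i^A > 0} ⊂ A, then there exists a shrinking q̂ of q with W(q̂) = W(q), so q is not exact. -/

import Mathlib

open Finset

/-- Möbius inversion of a set function `w : 2^N → ℝ`:
`μ^w(A) = ∑_{B ⊆ A} (−1)^{|A∖B|} w(B)`. -/
def mobius {n : ℕ} (w : Finset (Fin n) → ℝ) (A : Finset (Fin n)) : ℝ :=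
  ∑ B ∈ A.powerset, (-1 : ℝ) ^ (A.card - B.card) * w B

/-- `qi` is a membership distribution for element `i`: nonnegative, supported on
the subsets containing `i`, and summing to `1` over them. -/
def coordDist {n : ℕ} (i : Fin n) (qi : Finset (Fin n) → ℝ) : Prop :=
  (∀ A, 0 ≤ qi A) ∧ (∀ A, i ∉ A → qi A = 0) ∧
    ∑ A ∈ Finset.univ.filter (fun A => i ∈ A), qi A = 1

/-- A fuzzy cover `q ∈ Δ_N`. -/
def fuzzyCover {n : ℕ} (q : Fin n → Finset (Fin n) → ℝ) : Prop :=
  ∀ i, coordDist i (q i)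

/-- Global worth `W(q) = ∑_{A⊆N} ∑_{B⊆A} (∏_{i∈B} q_i^A) μ^w(B)`. -/
def W {n : ℕ} (w : Finset (Fin n) → ℝ) (q : Fin n → Finset (Fin n) → ℝ) : ℝ :=
  ∑ A : Finset (Fin n), ∑ B ∈ A.powerset, (∏ i ∈ B, q i A) * mobius w B

/-- `qh` is a shrinking of `q`: there is `A` carrying positive membership mass
`∑_{i∈A} q_i^A > 0` whose mass is entirely reallocated to the proper subsets of
`A`, leaving everything else (in particular elements outside `A`, and elements
`i ∈ A` with `q_i^A = 0`) unchanged. -/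
def IsShrinking {n : ℕ} (qh q : Fin n → Finset (Fin n) → ℝ) : Prop :=
  ∃ A : Finset (Fin n),
    0 < (∑ i ∈ A, q i A) ∧
    (∀ i : Fin n, ∀ B : Finset (Fin n), ¬ B ⊆ A → qh i B = q i B) ∧
    (∀ i : Fin n, qh i A = 0) ∧
    (∀ i : Fin n, i ∉ A → ∀ B : Finset (Fin n), qh i B = q i B) ∧
    (∀ i ∈ A, q i A = 0 → ∀ B : Finset (Fin n), qh i B = q i B) ∧
    (∀ i ∈ A, ∑ B ∈ A.powerset.erase A, qh i B = q i A + ∑ B ∈ A.powerset.erase A, q i B)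

/-- A fuzzy cover `q` is exact if every shrinking of it changes the global worth. -/
def Exact {n : ℕ} (w : Finset (Fin n) → ℝ) (q : Fin n → Finset (Fin n) → ℝ) : Prop :=
  ∀ qh : Fin n → Finset (Fin n) → ℝ, fuzzyCover qh → IsShrinking qh q → W w qh ≠ W w q

lemma mobius_empty {n : ℕ} (w : Finset (Fin n) → ℝ) (hw : w ∅ = 0) : mobius w ∅ = 0 := by
  simp [mobius, hw]

def colsum {n : ℕ} (w : Finset (Fin n) → ℝ) (x : Fin n → Finset (Fin n) → ℝ)
    (C : Finset (Fin n)) : ℝ :=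
  ∑ B ∈ C.powerset, (∏ i ∈ B, x i C) * mobius w B

lemma W_eq_colsum {n : ℕ} (w : Finset (Fin n) → ℝ) (x : Fin n → Finset (Fin n) → ℝ) :
    W w x = ∑ C : Finset (Fin n), colsum w x C := rfl

lemma W_update_affine {n : ℕ} (w : Finset (Fin n) → ℝ) (r : Fin n → Finset (Fin n) → ℝ)
    (k : Fin n) (x y : Finset (Fin n) → ℝ) (a b : ℝ) (hab : a + b = 1) :
    W w (Function.update r k (fun B => a * x B + b * y B)) =
      a * W w (Function.update r k x) + b * W w (Function.update r k y) := by
  unfold W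
  rw [Finset.mul_sum, Finset.mul_sum, ← Finset.sum_add_distrib]
  refine Finset.sum_congr rfl fun C _ => ?_
  rw [Finset.mul_sum, Finset.mul_sum, ← Finset.sum_add_distrib]
  refine Finset.sum_congr rfl fun B hB => ?_
  by_cases hk : k ∈ B
  · have h1 : ∀ z : Finset (Fin n) → ℝ,
        (∏ i ∈ B, Function.update r k z i C) = z C * ∏ i ∈ B.erase k, r i C := by
      intro z
      rw [← Finset.mul_prod_erase B _ hk, Function.update_self]
      congr 1
      exact Finset.prod_congr rfl fun i hi => by
        rw [Function.update_of_ne (Finset.ne_of_mem_erase hi)]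
    rw [h1, h1, h1]; ring
  · have h2 : ∀ z : Finset (Fin n) → ℝ,
        (∏ i ∈ B, Function.update r k z i C) = ∏ i ∈ B, r i C := by
      intro z
      exact Finset.prod_congr rfl fun i hi => by
        rw [Function.update_of_ne (by rintro rfl; exact hk hi)]
    rw [h2, h2, h2]
    linear_combination (-((∏ i ∈ B, r i C) * mobius w B)) * hab

/-- Invariant for the induction: `r` agrees with `q` outside `S` and outside the
subsets of `A`, is a nonnegative support-respecting reallocation of the mass of
each `i ∈ S` inside the powerset of `A`, and every `i ∈ S` outside `R` has been
"resolved": either no mass at `A`, or all its `A`-mass concentrated at `A`. -/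
structure ShrinkInv {n : ℕ} (q : Fin n → Finset (Fin n) → ℝ) (A S R : Finset (Fin n))
    (r : Fin n → Finset (Fin n) → ℝ) : Prop where
  outS : ∀ i, i ∉ S → r i = q i
  frozen : ∀ i B, ¬ B ⊆ A → r i B = q i B
  supp : ∀ i B, i ∉ B → r i B = 0
  nonneg : ∀ i B, 0 ≤ r i B
  mass : ∀ i ∈ S, ∑ B ∈ A.powerset, r i B = ∑ B ∈ A.powerset, q i B
  res : ∀ i ∈ S, i ∉ R → r i A = 0 ∨ (∀ B ∈ A.powerset.erase A, r i B = 0)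
lemma key {n : ℕ} (w : Finset (Fin n) → ℝ) (hw : w ∅ = 0)
    (q : Fin n → Finset (Fin n) → ℝ) (A S : Finset (Fin n))
    (hSA : S ⊆ A) (hSne : S ≠ A)
    (hq0 : ∀ i B, 0 ≤ q i B) (hqs : ∀ (i : Fin n) (B : Finset (Fin n)), i ∉ B → q i B = 0)
    (hZ : ∀ i, i ∉ S → q i A = 0) :
    ∀ R r, ShrinkInv q A S R r →
      ∃ p1 p2, ShrinkInv q A S ∅ p1 ∧ ShrinkInv q A S ∅ p2 ∧ (∀ i, p1 i A = 0) ∧ (∀ i, p2 i A = 0) ∧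
        W w p1 ≤ W w r ∧ W w r ≤ W w p2 := by
  classical
  intro R
  induction R using Finset.induction_on with
  | empty =>
    intro r hr
    set m : Fin n → ℝ := fun i => ∑ B ∈ A.powerset, q i B with hm
    set T : Finset (Fin n) := S.filter (fun i => r i A ≠ 0) with hT
    have hTS : T ⊆ S := Finset.filter_subset _ _
    have hTA : T ⊆ A := hTS.trans hSA
    have hTneA : T ≠ A := fun h => hSne (Finset.Subset.antisymm hSA (h ▸ hTS))
    have hres : ∀ i ∈ T, ∀ B ∈ A.powerset.erase A, r i B = 0 := by
      intro i hi
      rcases hr.res i (hTS hi) (Finset.notMem_empty i) with h0 | h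
      · exact absurd h0 (Finset.mem_filter.mp hi).2
      · exact h
    have hrT : ∀ i ∈ T, r i A = m i := by
      intro i hi
      have h1 : r i A + ∑ B ∈ A.powerset.erase A, r i B = ∑ B ∈ A.powerset, r i B :=
        Finset.add_sum_erase _ _ (Finset.mem_powerset_self A)
      have h2 : ∑ B ∈ A.powerset.erase A, r i B = 0 := Finset.sum_eq_zero (hres i hi)
      have h3 := hr.mass i (hTS hi)
      have : r i A = ∑ B ∈ A.powerset, r i B := by rw [← h1, h2, add_zero]
      rw [this, h3]
    have hr0 : ∀ i, i ∉ T → r i A = 0 := by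
      intro i hi
      by_cases hiS : i ∈ S
      · by_contra hne
        exact hi (Finset.mem_filter.mpr ⟨hiS, hne⟩)
      · rw [hr.outS i hiS]; exact hZ i hiS
    set p : Fin n → Finset (Fin n) → ℝ :=
      fun i B => if i ∈ T then (if B = T then m i else if B ⊆ A then 0 else q i B)
        else r i B with hp
    have hm0 : ∀ i, 0 ≤ m i := fun i => Finset.sum_nonneg fun B _ => hq0 i B
    have hpA : ∀ i, p i A = 0 := by
      intro i
      by_cases hi : i ∈ T
      · simp only [hp, hi, if_true]
        rw [if_neg (Ne.symm hTneA), if_pos Finset.Subset.rfl]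
      · simp only [hp, hi, if_false]; exact hr0 i hi
    have hother : ∀ C, C ≠ A → C ≠ T → ∀ i, p i C = r i C := by
      intro C hCA hCT i
      by_cases hi : i ∈ T
      · simp only [hp, hi, if_true]
        rw [if_neg hCT]
        by_cases hCsub : C ⊆ A
        · rw [if_pos hCsub]
          exact (hres i hi C (Finset.mem_erase.mpr ⟨hCA, Finset.mem_powerset.mpr hCsub⟩)).symm
        · rw [if_neg hCsub]
          exact (hr.frozen i C hCsub).symm
      · simp only [hp, hi, if_false]
    have h1 : colsum w p A = 0 := by
      refine Finset.sum_eq_zero fun B hB => ?_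
      rcases B.eq_empty_or_nonempty with rfl | ⟨i, hi⟩
      · simp [mobius_empty w hw]
      · rw [Finset.prod_eq_zero hi (hpA i), zero_mul]
    have h2 : colsum w r T = 0 := by
      refine Finset.sum_eq_zero fun B hB => ?_
      rcases B.eq_empty_or_nonempty with rfl | ⟨i, hi⟩
      · simp [mobius_empty w hw]
      · have hiT : i ∈ T := (Finset.mem_powerset.mp hB) hi
        rw [Finset.prod_eq_zero hi
          (hres i hiT T (Finset.mem_erase.mpr ⟨hTneA, Finset.mem_powerset.mpr hTA⟩)), zero_mul]
    have h3 : colsum w p T = colsum w r A := by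
      have hrA : colsum w r A = ∑ B ∈ T.powerset, (∏ i ∈ B, r i A) * mobius w B := by
        refine (Finset.sum_subset (Finset.powerset_mono.mpr hTA) fun B hB hB' => ?_).symm
        obtain ⟨i, hiB, hiT⟩ := Finset.not_subset.mp (fun h => hB' (Finset.mem_powerset.mpr h))
        rw [Finset.prod_eq_zero hiB (hr0 i hiT), zero_mul]
      rw [hrA]
      refine Finset.sum_congr rfl fun B hB => ?_
      congr 1
      refine Finset.prod_congr rfl fun i hi => ?_
      have hiT : i ∈ T := Finset.mem_powerset.mp hB hi
      rw [hrT i hiT]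
      simp only [hp, hiT, if_true, if_pos rfl]
    have hW : W w p = W w r := by
      rw [W_eq_colsum, W_eq_colsum]
      have hsplit : ∀ x : Fin n → Finset (Fin n) → ℝ,
          ∑ C : Finset (Fin n), colsum w x C =
            colsum w x A + (colsum w x T + ∑ C ∈ (Finset.univ.erase A).erase T, colsum w x C) := by
        intro x
        rw [← Finset.add_sum_erase _ _ (Finset.mem_univ A),
          ← Finset.add_sum_erase _ _ (Finset.mem_erase.mpr ⟨hTneA, Finset.mem_univ T⟩)]
      rw [hsplit, hsplit, h1, h2, h3]
      have hrest : ∑ C ∈ (Finset.univ.erase A).erase T, colsum w p C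
          = ∑ C ∈ (Finset.univ.erase A).erase T, colsum w r C := by
        refine Finset.sum_congr rfl fun C hC => ?_
        have hCT : C ≠ T := (Finset.mem_erase.mp hC).1
        have hCA : C ≠ A := (Finset.mem_erase.mp (Finset.mem_erase.mp hC).2).1
        unfold colsum
        exact Finset.sum_congr rfl fun B hB => by
          rw [Finset.prod_congr rfl fun i _ => hother C hCA hCT i]
      rw [hrest]; ring
    have hInvp : ShrinkInv q A S ∅ p := by
      constructor
      · intro i hiS
        have hiT : i ∉ T := fun h => hiS (hTS h)
        simp only [hp, hiT, if_false]
        exact hr.outS i hiS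
      · intro i B hBA
        by_cases hi : i ∈ T
        · have hBT : B ≠ T := fun h => hBA (h ▸ hTA)
          simp only [hp, hi, if_true, if_neg hBT, if_neg hBA]
        · simp only [hp, hi, if_false]; exact hr.frozen i B hBA
      · intro i B hiB
        by_cases hi : i ∈ T
        · simp only [hp, hi, if_true]
          by_cases hBT : B = T
          · exact absurd (hBT ▸ hi) hiB
          · rw [if_neg hBT]
            by_cases hBA : B ⊆ A
            · rw [if_pos hBA]
            · rw [if_neg hBA]; exact hqs i B hiB
        · simp only [hp, hi, if_false]; exact hr.supp i B hiB
      · intro i B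
        by_cases hi : i ∈ T
        · simp only [hp, hi, if_true]
          by_cases hBT : B = T
          · rw [if_pos hBT]; exact hm0 i
          · rw [if_neg hBT]
            by_cases hBA : B ⊆ A
            · rw [if_pos hBA]
            · rw [if_neg hBA]; exact hq0 i B
        · simp only [hp, hi, if_false]; exact hr.nonneg i B
      · intro i hiS
        by_cases hi : i ∈ T
        · have hval : ∀ B ∈ A.powerset, p i B = if B = T then m i else 0 := by
            intro B hB
            simp only [hp, hi, if_true]
            by_cases hBT : B = T
            · rw [if_pos hBT, if_pos hBT]
            · rw [if_neg hBT, if_neg hBT, if_pos (Finset.mem_powerset.mp hB)]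
          rw [Finset.sum_congr rfl hval, Finset.sum_ite_eq' A.powerset T (fun _ => m i),
            if_pos (Finset.mem_powerset.mpr hTA)]
        · simp only [hp, hi, if_false]; exact hr.mass i hiS
      · intro i hiS _
        left; exact hpA i
    exact ⟨p, p, hInvp, hInvp, hpA, hpA, le_of_eq hW, le_of_eq hW.symm⟩
  | @insert k R' hkR' ih =>
    intro r hr
    by_cases hkS : k ∈ S
    case neg =>
      refine ih r ⟨hr.outS, hr.frozen, hr.supp, hr.nonneg, hr.mass, ?_⟩
      intro i hiS hiR'
      refine hr.res i hiS fun h => ?_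
      rcases Finset.mem_insert.mp h with h | h
      · exact hkS (h ▸ hiS)
      · exact hiR' h
    case pos =>
      obtain ⟨M, hM⟩ : ∃ x : ℝ, x = ∑ B ∈ A.powerset, r k B := ⟨_, rfl⟩
      have hα0 : 0 ≤ r k A := hr.nonneg k A
      have hαM : r k A ≤ M := by
        rw [hM]
        exact Finset.single_le_sum (fun B _ => hr.nonneg k B) (Finset.mem_powerset_self A)
      by_cases hc0 : r k A = 0
      · refine ih r ⟨hr.outS, hr.frozen, hr.supp, hr.nonneg, hr.mass, ?_⟩
        intro i hiS hiR'
        by_cases hik : i = k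
        · left; rw [hik]; exact hc0
        · refine hr.res i hiS fun h => ?_
          rcases Finset.mem_insert.mp h with h | h
          · exact hik h
          · exact hiR' h
      by_cases hcM : r k A = M
      · have hsum0 : ∑ B ∈ A.powerset.erase A, r k B = 0 := by
          have h1 : r k A + ∑ B ∈ A.powerset.erase A, r k B = ∑ B ∈ A.powerset, r k B :=
            Finset.add_sum_erase _ _ (Finset.mem_powerset_self A)
          rw [← hM] at h1
          linarith
        have hzero : ∀ B ∈ A.powerset.erase A, r k B = 0 :=
          (Finset.sum_eq_zero_iff_of_nonneg (fun B _ => hr.nonneg k B)).mp hsum0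
        refine ih r ⟨hr.outS, hr.frozen, hr.supp, hr.nonneg, hr.mass, ?_⟩
        intro i hiS hiR'
        by_cases hik : i = k
        · right; rw [hik]; exact hzero
        · refine hr.res i hiS fun h => ?_
          rcases Finset.mem_insert.mp h with h | h
          · exact hik h
          · exact hiR' h
      -- main case: 0 < r k A < M
      have hαpos : 0 < r k A := lt_of_le_of_ne hα0 (Ne.symm hc0)
      have hαlt : r k A < M := lt_of_le_of_ne hαM hcM
      have hMpos : 0 < M := lt_of_lt_of_le hαpos hαM
      have hM0 : M ≠ 0 := ne_of_gt hMpos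
      have hMα0 : M - r k A ≠ 0 := by linarith
      set uk : Finset (Fin n) → ℝ :=
        fun B => if B = A then M else if B ⊆ A then 0 else q k B with huk
      set vk : Finset (Fin n) → ℝ :=
        fun B => if B = A then 0 else if B ⊆ A then (M / (M - r k A)) * r k B else q k B with hvk
      set a : ℝ := r k A / M with haa
      set b : ℝ := (M - r k A) / M with hbb
      have hab : a + b = 1 := by
        rw [haa, hbb]; field_simp; ring
      have ha0 : 0 ≤ a := by
        rw [haa]; exact div_nonneg hα0 (le_of_lt hMpos)
      have hb0 : 0 ≤ b := by
        rw [hbb]; exact div_nonneg (by linarith) (le_of_lt hMpos)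
      have hcomb : r = Function.update r k (fun B => a * uk B + b * vk B) := by
        funext i
        by_cases hik : i = k
        · subst hik
          rw [Function.update_self]
          funext B
          by_cases hBA : B = A
          · subst hBA
            simp only [huk, hvk, if_pos rfl, haa]
            field_simp
            ring
          · by_cases hBsub : B ⊆ A
            · simp only [huk, hvk, if_neg hBA, if_pos hBsub, haa, hbb]
              field_simp
              ring
            · simp only [huk, hvk, if_neg hBA, if_neg hBsub]
              rw [hr.frozen i B hBsub]
              linear_combination (q i B) * hab.symm
        · rw [Function.update_of_ne hik]
      set u : Fin n → Finset (Fin n) → ℝ := Function.update r k uk with hu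
      set v : Fin n → Finset (Fin n) → ℝ := Function.update r k vk with hv
      have hWr : W w r = a * W w u + b * W w v := by
        nth_rewrite 1 [hcomb]
        exact W_update_affine w r k uk vk a b hab
      have hInvu : ShrinkInv q A S R' u := by
        constructor
        · intro i hiS
          rw [hu, Function.update_of_ne (fun h => hiS (by rw [h]; exact hkS))]
          exact hr.outS i hiS
        · intro i B hBA
          by_cases hik : i = k
          · subst hik
            rw [hu, Function.update_self]
            simp only [huk]
            rw [if_neg (fun h => hBA (le_of_eq h)), if_neg hBA]
          · rw [hu, Function.update_of_ne hik]; exact hr.frozen i B hBA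
        · intro i B hiB
          by_cases hik : i = k
          · subst hik
            rw [hu, Function.update_self]
            simp only [huk]
            by_cases hBA : B = A
            · exact absurd (hBA ▸ hSA hkS) hiB
            · rw [if_neg hBA]
              by_cases hBsub : B ⊆ A
              · rw [if_pos hBsub]
              · rw [if_neg hBsub]; exact hqs i B hiB
          · rw [hu, Function.update_of_ne hik]; exact hr.supp i B hiB
        · intro i B
          by_cases hik : i = k
          · subst hik
            rw [hu, Function.update_self]
            simp only [huk]
            by_cases hBA : B = A
            · rw [if_pos hBA]; exact le_of_lt hMpos
            · rw [if_neg hBA]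
              by_cases hBsub : B ⊆ A
              · rw [if_pos hBsub]
              · rw [if_neg hBsub]; exact hq0 i B
          · rw [hu, Function.update_of_ne hik]; exact hr.nonneg i B
        · intro i hiS
          by_cases hik : i = k
          · subst hik
            have hval : ∀ B ∈ A.powerset, u i B = if B = A then M else 0 := by
              intro B hB
              rw [hu, Function.update_self]
              simp only [huk]
              by_cases hBA : B = A
              · rw [if_pos hBA, if_pos hBA]
              · rw [if_neg hBA, if_neg hBA, if_pos (Finset.mem_powerset.mp hB)]
            rw [Finset.sum_congr rfl hval, Finset.sum_ite_eq' A.powerset A (fun _ => M),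
              if_pos (Finset.mem_powerset_self A), hM]
            exact hr.mass i hiS
          · rw [hu]
            have : Function.update r k uk i = r i := Function.update_of_ne hik _ _
            rw [this]
            exact hr.mass i hiS
        · intro i hiS hiR'
          by_cases hik : i = k
          · subst hik
            right
            intro B hB
            rw [hu, Function.update_self]
            simp only [huk]
            rw [if_neg (Finset.mem_erase.mp hB).1,
              if_pos (Finset.mem_powerset.mp (Finset.mem_erase.mp hB).2)]
          · rw [hu]
            have heq : Function.update r k uk i = r i := Function.update_of_ne hik _ _
            rw [heq]
            refine hr.res i hiS fun h => ?_
            rcases Finset.mem_insert.mp h with h | h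
            · exact hik h
            · exact hiR' h
      have hInvv : ShrinkInv q A S R' v := by
        constructor
        · intro i hiS
          rw [hv, Function.update_of_ne (fun h => hiS (by rw [h]; exact hkS))]
          exact hr.outS i hiS
        · intro i B hBA
          by_cases hik : i = k
          · subst hik
            rw [hv, Function.update_self]
            simp only [hvk]
            rw [if_neg (fun h => hBA (le_of_eq h)), if_neg hBA]
          · rw [hv, Function.update_of_ne hik]; exact hr.frozen i B hBA
        · intro i B hiB
          by_cases hik : i = k
          · subst hik
            rw [hv, Function.update_self]
            simp only [hvk]
            by_cases hBA : B = A
            · exact absurd (hBA ▸ hSA hkS) hiB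
            · rw [if_neg hBA]
              by_cases hBsub : B ⊆ A
              · rw [if_pos hBsub, hr.supp i B hiB, mul_zero]
              · rw [if_neg hBsub]; exact hqs i B hiB
          · rw [hv, Function.update_of_ne hik]; exact hr.supp i B hiB
        · intro i B
          by_cases hik : i = k
          · subst hik
            rw [hv, Function.update_self]
            simp only [hvk]
            by_cases hBA : B = A
            · rw [if_pos hBA]
            · rw [if_neg hBA]
              by_cases hBsub : B ⊆ A
              · rw [if_pos hBsub]
                have h1 : 0 ≤ M / (M - r i A) := by
                  apply div_nonneg (le_of_lt hMpos)
                  linarith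
                exact mul_nonneg h1 (hr.nonneg i B)
              · rw [if_neg hBsub]; exact hq0 i B
          · rw [hv, Function.update_of_ne hik]; exact hr.nonneg i B
        · intro i hiS
          by_cases hik : i = k
          · subst hik
            have hval : ∀ B ∈ A.powerset, v i B
                = if B = A then 0 else (M / (M - r i A)) * r i B := by
              intro B hB
              rw [hv, Function.update_self]
              simp only [hvk]
              by_cases hBA : B = A
              · rw [if_pos hBA, if_pos hBA]
              · rw [if_neg hBA, if_neg hBA, if_pos (Finset.mem_powerset.mp hB)]
            rw [Finset.sum_congr rfl hval]
            have hsplit : ∑ B ∈ A.powerset, (if B = A then (0:ℝ) else (M / (M - r i A)) * r i B)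
                = ∑ B ∈ A.powerset.erase A, (M / (M - r i A)) * r i B := by
              rw [← Finset.add_sum_erase _ _ (Finset.mem_powerset_self A), if_pos rfl, zero_add]
              exact Finset.sum_congr rfl fun B hB => by
                rw [if_neg (Finset.mem_erase.mp hB).1]
            rw [hsplit, ← Finset.mul_sum]
            have herase : ∑ B ∈ A.powerset.erase A, r i B = M - r i A := by
              have h1 : r i A + ∑ B ∈ A.powerset.erase A, r i B = ∑ B ∈ A.powerset, r i B :=
                Finset.add_sum_erase _ _ (Finset.mem_powerset_self A)
              rw [← hM] at h1
              linarith
            rw [herase]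
            have : M / (M - r i A) * (M - r i A) = M := by
              field_simp
            rw [this, hM]
            exact hr.mass i hiS
          · rw [hv]
            have heq : Function.update r k vk i = r i := Function.update_of_ne hik _ _
            rw [heq]
            exact hr.mass i hiS
        · intro i hiS hiR'
          by_cases hik : i = k
          · subst hik
            left
            rw [hv, Function.update_self]
            simp only [hvk, if_pos rfl]
          · rw [hv]
            have heq : Function.update r k vk i = r i := Function.update_of_ne hik _ _
            rw [heq]
            refine hr.res i hiS fun h => ?_
            rcases Finset.mem_insert.mp h with h | h
            · exact hik h
            · exact hiR' h
      obtain ⟨p1u, p2u, hI1u, hI2u, hA1u, hA2u, hle1u, hle2u⟩ := ih u hInvu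
      obtain ⟨p1v, p2v, hI1v, hI2v, hA1v, hA2v, hle1v, hle2v⟩ := ih v hInvv
      have hlow : a * W w p1u + b * W w p1v ≤ W w r := by
        rw [hWr]
        have h1 := mul_le_mul_of_nonneg_left hle1u ha0
        have h2 := mul_le_mul_of_nonneg_left hle1v hb0
        linarith
      have hhigh : W w r ≤ a * W w p2u + b * W w p2v := by
        rw [hWr]
        have h1 := mul_le_mul_of_nonneg_left hle2u ha0
        have h2 := mul_le_mul_of_nonneg_left hle2v hb0
        linarith
      obtain ⟨pl, hIl, hAl, hll⟩ :
          ∃ p, ShrinkInv q A S ∅ p ∧ (∀ i, p i A = 0) ∧ W w p ≤ W w r := by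
        rcases le_total (W w p1u) (W w p1v) with h | h
        · refine ⟨p1u, hI1u, hA1u, ?_⟩
          have h2 := mul_le_mul_of_nonneg_left h hb0
          have h3 : (a + b) * W w p1u = W w p1u := by rw [hab, one_mul]
          nlinarith
        · refine ⟨p1v, hI1v, hA1v, ?_⟩
          have h2 := mul_le_mul_of_nonneg_left h ha0
          have h3 : (a + b) * W w p1v = W w p1v := by rw [hab, one_mul]
          nlinarith
      obtain ⟨pu, hIu, hAu, huu⟩ :
          ∃ p, ShrinkInv q A S ∅ p ∧ (∀ i, p i A = 0) ∧ W w r ≤ W w p := by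
        rcases le_total (W w p2u) (W w p2v) with h | h
        · refine ⟨p2v, hI2v, hA2v, ?_⟩
          have h2 := mul_le_mul_of_nonneg_left h ha0
          have h3 : (a + b) * W w p2v = W w p2v := by rw [hab, one_mul]
          nlinarith
        · refine ⟨p2u, hI2u, hA2u, ?_⟩
          have h2 := mul_le_mul_of_nonneg_left h hb0
          have h3 : (a + b) * W w p2u = W w p2u := by rw [hab, one_mul]
          nlinarith
      exact ⟨pl, pu, hIl, hIu, hAl, hAu, hll, huu⟩
/-- if a fuzzy cover `q` is exact, then for every `A ⊆ N` the number
of elements of `A` with strictly positive membership on `A` is `0` or `|A|`. -/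
theorem exact_support_all_or_nothing {n : ℕ} (w : Finset (Fin n) → ℝ) (hw : w ∅ = 0)
    (q : Fin n → Finset (Fin n) → ℝ) (hq : fuzzyCover q) (hex : Exact w q) :
    ∀ A : Finset (Fin n),
      (A.filter (fun i => 0 < q i A)).card = 0 ∨
      (A.filter (fun i => 0 < q i A)).card = A.card := by
  classical
  by_contra hcon
  push_neg at hcon
  obtain ⟨A, hc1, hc2⟩ := hcon
  set S : Finset (Fin n) := A.filter (fun i => 0 < q i A) with hS
  have hSA : S ⊆ A := Finset.filter_subset _ _
  have hSne : S ≠ A := fun h => hc2 (by rw [h])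
  have hq0 : ∀ i B, 0 ≤ q i B := fun i B => (hq i).1 B
  have hqs : ∀ (i : Fin n) (B : Finset (Fin n)), i ∉ B → q i B = 0 :=
    fun i B h => (hq i).2.1 B h
  have hZ : ∀ i, i ∉ S → q i A = 0 := by
    intro i hiS
    by_cases hiA : i ∈ A
    · by_contra hne
      exact hiS (Finset.mem_filter.mpr ⟨hiA, lt_of_le_of_ne (hq0 i A) (Ne.symm hne)⟩)
    · exact hqs i A hiA
  have hSnonempty : S.Nonempty := Finset.card_pos.mp (Nat.pos_of_ne_zero hc1)
  obtain ⟨p1, p2, hI1, hI2, hp1A, hp2A, hle1, hle2⟩ :=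
    key w hw q A S hSA hSne hq0 hqs hZ S q
      ⟨fun i _ => rfl, fun i B _ => rfl, hqs, hq0, fun i _ => rfl,
        fun i hiS hiS' => absurd hiS hiS'⟩
  have hcont : Continuous fun t : ℝ => W w (fun i B => (1 - t) * p1 i B + t * p2 i B) := by
    unfold W
    apply continuous_finset_sum
    intro C _
    apply continuous_finset_sum
    intro B _
    apply Continuous.mul _ continuous_const
    apply continuous_finset_prod
    intro i _
    fun_prop
  have hg0 : (fun i B => (1 - (0:ℝ)) * p1 i B + (0:ℝ) * p2 i B) = p1 := by
    funext i B; ring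
  have hg1 : (fun i B => (1 - (1:ℝ)) * p1 i B + (1:ℝ) * p2 i B) = p2 := by
    funext i B; ring
  have hmem : W w q ∈ Set.Icc
      (W w (fun i B => (1 - (0:ℝ)) * p1 i B + (0:ℝ) * p2 i B))
      (W w (fun i B => (1 - (1:ℝ)) * p1 i B + (1:ℝ) * p2 i B)) := by
    rw [hg0, hg1]; exact ⟨hle1, hle2⟩
  obtain ⟨t, ht01, htW⟩ := intermediate_value_Icc zero_le_one hcont.continuousOn hmem
  have ht0 : 0 ≤ t := ht01.1
  have ht1 : 0 ≤ 1 - t := by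
    have := ht01.2
    linarith
  set qh : Fin n → Finset (Fin n) → ℝ := fun i B => (1 - t) * p1 i B + t * p2 i B with hqh
  have hqhW : W w qh = W w q := htW
  -- totals of p1, p2 over sets containing i equal totals of q
  have htotal : ∀ p : Fin n → Finset (Fin n) → ℝ, ShrinkInv q A S ∅ p →
      ∀ i, ∑ B ∈ Finset.univ.filter (fun B => i ∈ B), p i B
        = ∑ B ∈ Finset.univ.filter (fun B => i ∈ B), q i B := by
    intro p hI i
    have hext : ∀ (x : Fin n → Finset (Fin n) → ℝ), (∀ B, i ∉ B → x i B = 0) →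
        ∑ B ∈ Finset.univ.filter (fun B => i ∈ B), x i B = ∑ B : Finset (Fin n), x i B := by
      intro x hx
      refine Finset.sum_subset (Finset.filter_subset _ _) fun B _ hB => hx B ?_
      simpa using hB
    have hpow : Finset.univ.filter (fun B : Finset (Fin n) => B ⊆ A) = A.powerset := by
      ext B; simp
    rw [hext p (hI.supp i), hext q (fun B h => hqs i B h),
      ← Finset.sum_filter_add_sum_filter_not Finset.univ (fun B => B ⊆ A) (p i),
      ← Finset.sum_filter_add_sum_filter_not Finset.univ (fun B => B ⊆ A) (q i), hpow]
    congr 1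
    · by_cases hiS : i ∈ S
      · exact hI.mass i hiS
      · exact Finset.sum_congr rfl fun B _ => congrFun (hI.outS i hiS) B
    · exact Finset.sum_congr rfl fun B hB => hI.frozen i B (by simpa using (Finset.mem_filter.mp hB).2)
  have hcover : fuzzyCover qh := by
    intro i
    refine ⟨?_, ?_, ?_⟩
    · intro B
      exact add_nonneg (mul_nonneg ht1 (hI1.nonneg i B)) (mul_nonneg ht0 (hI2.nonneg i B))
    · intro B hiB
      simp only [hqh]
      rw [hI1.supp i B hiB, hI2.supp i B hiB]
      ring
    · simp only [hqh]
      rw [Finset.sum_add_distrib, ← Finset.mul_sum, ← Finset.mul_sum,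
        htotal p1 hI1 i, htotal p2 hI2 i]
      have h1 := (hq i).2.2
      linarith
  have hshr : IsShrinking qh q := by
    refine ⟨A, ?_, ?_, ?_, ?_, ?_, ?_⟩
    · obtain ⟨i0, hi0⟩ := hSnonempty
      refine Finset.sum_pos' (fun i _ => hq0 i A) ⟨i0, hSA hi0, ?_⟩
      exact (Finset.mem_filter.mp hi0).2
    · intro i B hBA
      simp only [hqh]
      rw [hI1.frozen i B hBA, hI2.frozen i B hBA]
      ring
    · intro i
      simp only [hqh]
      rw [hp1A i, hp2A i]
      ring
    · intro i hiA B
      have hiS : i ∉ S := fun h => hiA (hSA h)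
      simp only [hqh]
      rw [congrFun (hI1.outS i hiS) B, congrFun (hI2.outS i hiS) B]
      ring
    · intro i hiA h0 B
      have hiS : i ∉ S := by
        intro h
        have := (Finset.mem_filter.mp h).2
        rw [h0] at this
        exact lt_irrefl 0 this
      simp only [hqh]
      rw [congrFun (hI1.outS i hiS) B, congrFun (hI2.outS i hiS) B]
      ring
    · intro i hiA
      have hpe : ∀ p : Fin n → Finset (Fin n) → ℝ, ShrinkInv q A S ∅ p → (∀ j, p j A = 0) →
          ∑ B ∈ A.powerset.erase A, p i B = ∑ B ∈ A.powerset, q i B := by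
        intro p hI hpA
        have h1 : p i A + ∑ B ∈ A.powerset.erase A, p i B = ∑ B ∈ A.powerset, p i B :=
          Finset.add_sum_erase _ _ (Finset.mem_powerset_self A)
        rw [hpA i, zero_add] at h1
        rw [h1]
        by_cases hiS : i ∈ S
        · exact hI.mass i hiS
        · exact Finset.sum_congr rfl fun B _ => congrFun (hI.outS i hiS) B
      have h2 : q i A + ∑ B ∈ A.powerset.erase A, q i B = ∑ B ∈ A.powerset, q i B :=
        Finset.add_sum_erase _ _ (Finset.mem_powerset_self A)
      simp only [hqh]
      rw [Finset.sum_add_distrib, ← Finset.mul_sum, ← Finset.mul_sum,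
        hpe p1 hI1 hp1A, hpe p2 hI2 hp2A]
      linarith
  exact absurd hqhW (hex qh hcover hshr)
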